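/- Let n ≥ 1 and let K ⊆ ℝ^n be a nonempty compact set. Then the convex hull of K equals the convex hull of its frontier: convexHull(K) = convexHull(∂K). -/

import Mathlib

/-- **Convex hull of a compact set equals the convex hull of its frontier.**
For `n ≥ 1` and a nonempty compact `K ⊆ ℝ^n`, `convexHull K = convexHull (∂K)`. -/
theorem convexHull_eq_convexHull_frontier {n : ℕ} (hn : 1 ≤ n)
    (K : Set (EuclideanSpace ℝ (Fin n))) (hKne : K.Nonempty) (hKc : IsCompact K) :
    convexHull ℝ K = convexHull ℝ (frontier K) := by
  have hKcl : IsClosed K := hKc.isClosed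
  apply le_antisymm
  · apply convexHull_min _ (convex_convexHull ℝ _)
    intro x hx
    set v : EuclideanSpace ℝ (Fin n) := EuclideanSpace.single ⟨0, hn⟩ (1:ℝ) with hv
    have hvnorm : ‖v‖ = 1 := by simp [hv, EuclideanSpace.norm_single]
    set S : Set ℝ := {t | x + t • v ∈ K} with hS
    have hScl : IsClosed S := hKcl.preimage (by continuity)
    have h0S : (0:ℝ) ∈ S := by simp [hS, hx]
    have hSne : S.Nonempty := ⟨0, h0S⟩
    obtain ⟨R, hR⟩ := hKc.isBounded.subset_closedBall 0
    have hbdd : ∀ t ∈ S, |t| ≤ R + ‖x‖ := by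
      intro t ht
      have h1 : ‖x + t • v‖ ≤ R := by
        simpa [dist_eq_norm] using hR ht
      have h2 : |t| = ‖(x + t • v) - x‖ := by
        rw [show (x + t • v) - x = t • v by abel, norm_smul, hvnorm,
          Real.norm_eq_abs, mul_one]
      rw [h2]
      calc ‖(x + t • v) - x‖ ≤ ‖x + t • v‖ + ‖x‖ := norm_sub_le _ _
        _ ≤ R + ‖x‖ := by linarith
    have hbddA : BddAbove S := ⟨R + ‖x‖, fun t ht => (le_abs_self t).trans (hbdd t ht)⟩
    have hbddB : BddBelow S := ⟨-(R + ‖x‖), fun t ht => by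
      have := hbdd t ht; have := neg_abs_le t; linarith⟩
    set a := sInf S with ha
    set b := sSup S with hb
    have haS : a ∈ S := hScl.csInf_mem hSne hbddB
    have hbS : b ∈ S := hScl.csSup_mem hSne hbddA
    have ha0 : a ≤ 0 := csInf_le hbddB h0S
    have hb0 : 0 ≤ b := le_csSup hbddA h0S
    have hbf : x + b • v ∈ frontier K := by
      rw [hKcl.frontier_eq]
      refine ⟨hbS, fun hint => ?_⟩
      obtain ⟨ε, hε, hball⟩ := Metric.isOpen_iff.1 isOpen_interior _ hint
      have hmem : b + ε/2 ∈ S := by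
        show x + (b + ε/2) • v ∈ K
        refine interior_subset (hball ?_)
        rw [Metric.mem_ball, dist_eq_norm,
          show (x + (b + ε/2) • v) - (x + b • v) = (ε/2) • v by module,
          norm_smul, hvnorm, mul_one, Real.norm_eq_abs, abs_of_pos (by linarith)]
        linarith
      have := le_csSup hbddA hmem
      linarith
    have haf : x + a • v ∈ frontier K := by
      rw [hKcl.frontier_eq]
      refine ⟨haS, fun hint => ?_⟩
      obtain ⟨ε, hε, hball⟩ := Metric.isOpen_iff.1 isOpen_interior _ hint
      have hmem : a - ε/2 ∈ S := by
        show x + (a - ε/2) • v ∈ K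
        refine interior_subset (hball ?_)
        rw [Metric.mem_ball, dist_eq_norm,
          show (x + (a - ε/2) • v) - (x + a • v) = (-(ε/2)) • v by module,
          norm_smul, hvnorm, mul_one, Real.norm_eq_abs]
        rw [abs_of_neg (by linarith)]
        linarith
      have := csInf_le hbddB hmem
      linarith
    rcases eq_or_lt_of_le (ha0.trans hb0) with heq | hab
    · have ha' : a = 0 := le_antisymm ha0 (heq ▸ hb0)
      have : x + a • v ∈ frontier K := haf
      rw [ha'] at this
      simp only [zero_smul, add_zero] at this
      exact subset_convexHull ℝ _ this
    · set μ := b / (b - a) with hμdef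
      set lam := (-a) / (b - a) with hlamdef
      have hba : 0 < b - a := by linarith
      have hμ : 0 ≤ μ := div_nonneg hb0 hba.le
      have hlam : 0 ≤ lam := div_nonneg (by linarith) hba.le
      have hsum : μ + lam = 1 := by
        rw [hμdef, hlamdef, ← add_div, div_eq_one_iff_eq hba.ne']
        ring
      have hzero : μ * a + lam * b = 0 := by
        field_simp [hμdef, hlamdef]
        ring
      have hcomb : μ • (x + a • v) + lam • (x + b • v) = x := by
        have : μ • (x + a • v) + lam • (x + b • v)
            = (μ + lam) • x + (μ * a + lam * b) • v := by module
        rw [this, hsum, hzero, one_smul, zero_smul, add_zero]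
      have := (convex_convexHull ℝ (frontier K))
        (subset_convexHull ℝ _ haf) (subset_convexHull ℝ _ hbf) hμ hlam hsum
      rwa [hcomb] at this
  · exact convexHull_mono (by rw [hKcl.frontier_eq]; exact Set.diff_subset)
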